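/- (Deterministic core of Lemma roi: the region of interest contains the Nash equilibrium.) If the confidence bounds are valid and x* ∈ X is a pure Nash equilibrium, then x* belongs to the region of interest ROI = {x ∈ X : LCB_f(x) ≤ min( min_{x' ∈ X} UCB_f(x'), 0 )}. -/
import Mathlib


/-- The partial maximum `max_{x'_i ∈ X_i} g(x'_i, x_{-i})`. -/
noncomputable def pmax {I : Type*} [DecidableEq I] {X : I → Type*}
    [∀ i, Fintype (X i)] [∀ i, Nonempty (X i)]
    (g : (∀ j, X j) → ℝ) (i : I) (x : ∀ j, X j) : ℝ :=
  Finset.univ.sup' Finset.univ_nonempty (fun x' : X i => g (Function.update x i x'))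

/-- Upper confidence bound for the loss:
`UCB_f(x) = Σ_i ( max_{x'_i} U_i(x'_i, x_{-i}) − L_i(x) )`. -/
noncomputable def UCBf {I : Type*} [Fintype I] [DecidableEq I] {X : I → Type*}
    [∀ i, Fintype (X i)] [∀ i, Nonempty (X i)]
    (U L : I → (∀ j, X j) → ℝ) (x : ∀ j, X j) : ℝ :=
  ∑ i, (pmax (U i) i x - L i x)

/-- Lower confidence bound for the loss:
`LCB_f(x) = Σ_i ( max_{x'_i} L_i(x'_i, x_{-i}) − U_i(x) )`. -/
noncomputable def LCBf {I : Type*} [Fintype I] [DecidableEq I] {X : I → Type*}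
    [∀ i, Fintype (X i)] [∀ i, Nonempty (X i)]
    (U L : I → (∀ j, X j) → ℝ) (x : ∀ j, X j) : ℝ :=
  ∑ i, (pmax (L i) i x - U i x)

/-- The loss function `f(x) = Σ_i ( max_{x'_i ∈ X_i} u_i(x'_i, x_{-i}) − u_i(x) )`. -/
noncomputable def loss {I : Type*} [Fintype I] [DecidableEq I] {X : I → Type*}
    [∀ i, Fintype (X i)] [∀ i, Nonempty (X i)]
    (u : I → (∀ j, X j) → ℝ) (x : ∀ j, X j) : ℝ :=
  ∑ i, (pmax (u i) i x - u i x)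

/-- Deterministic core of Lemma roi: if the confidence bounds are valid and `x*` is a
pure Nash equilibrium, then `x*` belongs to the region of interest
`ROI = {x ∈ X : LCB_f(x) ≤ min( min_{x'} UCB_f(x'), 0 )}`. -/
theorem nash_in_roi
    {I : Type*} [Fintype I] [Nonempty I] [DecidableEq I]
    {X : I → Type*} [∀ i, Fintype (X i)] [∀ i, Nonempty (X i)]
    (u U L : I → (∀ j, X j) → ℝ)
    (hvalid : ∀ (i : I) (x : ∀ j, X j), L i x ≤ u i x ∧ u i x ≤ U i x)
    (xstar : ∀ j, X j)
    (hne : ∀ i : I, ∀ x' : X i, u i (Function.update xstar i x') ≤ u i xstar) :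
    xstar ∈ {x : ∀ j, X j |
      LCBf U L x ≤ min (Finset.univ.inf' Finset.univ_nonempty (UCBf U L)) 0} := by
  have hL : LCBf U L xstar ≤ 0 := by
    apply Finset.sum_nonpos
    intro i _
    have h1 : pmax (L i) i xstar ≤ u i xstar := by
      apply Finset.sup'_le
      intro x' _
      exact (hvalid i _).1.trans (hne i x')
    have h2 : u i xstar ≤ U i xstar := (hvalid i xstar).2
    linarith
  have hU : ∀ x : ∀ j, X j, (0:ℝ) ≤ UCBf U L x := by
    intro x
    apply Finset.sum_nonneg
    intro i _
    have h1 : u i x ≤ pmax (U i) i x := by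
      have h := Finset.le_sup' (fun x' : X i => U i (Function.update x i x'))
        (Finset.mem_univ (x i))
      rw [Function.update_eq_self] at h
      exact ((hvalid i x).2.trans h)
    have h2 : L i x ≤ u i x := (hvalid i x).1
    linarith
  simp only [Set.mem_setOf_eq, le_min_iff]
  exact ⟨hL.trans (Finset.le_inf' _ _ fun x _ => hU x), hL⟩
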